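/- The digraph G has a Hamiltonian path if and only if the constructed layered digraph G' contains an s-t path X that uses at least one arc from each of the n disjoint vertical paths P_1,...,P_n. -/

import Mathlib

abbrev Vtx (n : ℕ) := Sum Unit (Sum (Fin n × Fin (2 * n)) Unit)

def src (n : ℕ) : Vtx n := Sum.inl ()
def snk (n : ℕ) : Vtx n := Sum.inr (Sum.inr ())

/-- Arcs of `G'` built from a digraph `G` on `n` vertices: vertical arcs
`s → v_i^1`, `v_i^j → v_i^{j+1}`, `v_i^{2n} → t` (layers are 0-indexed here),
and diagonal arcs `v_i^{2j} → v_k^{2j+1}` (0-indexed: from an odd layer index to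
its successor) whenever `(v_i, v_k)` is an arc of `G`. -/
def Arc {n : ℕ} (G : Fin n → Fin n → Prop) : Vtx n → Vtx n → Prop
  | Sum.inl _, Sum.inr (Sum.inl (_, j)) => j.val = 0
  | Sum.inr (Sum.inl (i, j)), Sum.inr (Sum.inl (k, j')) =>
      (i = k ∧ j'.val = j.val + 1) ∨ (G i k ∧ j.val % 2 = 1 ∧ j'.val = j.val + 1)
  | Sum.inr (Sum.inl (_, j)), Sum.inr (Sum.inr _) => j.val = 2 * n - 1
  | _, _ => False

def IsPath {α : Type*} (A : α → α → Prop) (s t : α) (p : List α) : Prop :=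
  p.Chain' A ∧ p.head? = some s ∧ p.getLast? = some t

/-- A pair of endpoints forms a diagonal arc iff both are middle vertices lying in
different columns. -/
def isDiag {n : ℕ} : Vtx n × Vtx n → Bool
  | (Sum.inr (Sum.inl (i, _)), Sum.inr (Sum.inl (k, _))) => decide (i ≠ k)
  | _ => false

/-- A pair of endpoints forms a vertical arc of the vertical path `P_i`
(including the arcs leaving `s` and entering `t`). -/
def isVert {n : ℕ} (i : Fin n) : Vtx n × Vtx n → Bool
  | (Sum.inl _, Sum.inr (Sum.inl (k, _))) => decide (k = i)
  | (Sum.inr (Sum.inl (k, _)), Sum.inr (Sum.inl (k', _))) => decide (k = i ∧ k' = i)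
  | (Sum.inr (Sum.inl (k, _)), Sum.inr (Sum.inr _)) => decide (k = i)
  | _ => false

/-- `G` has a Hamiltonian (directed, simple) path visiting all `n` vertices. -/
def HasHamPath {n : ℕ} (G : Fin n → Fin n → Prop) : Prop :=
  ∃ l : List (Fin n), l.Nodup ∧ l.length = n ∧ l.Chain' G

/-- `G` has a Hamiltonian path iff the layered digraph `G'` contains an
`s`-`t` path that uses at least one arc from each of the `n` disjoint vertical
paths `P_1, …, P_n`. -/
abbrev mid {n : ℕ} (i : Fin n) (j : Fin (2 * n)) : Vtx n := Sum.inr (Sum.inl (i, j))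

def build {n : ℕ} : List (Fin n) → ℕ → List (Vtx n)
  | [], _ => [snk n]
  | i :: rest, m =>
      mid i ⟨2 * m % (2 * n), Nat.mod_lt _ (by have := i.pos; omega)⟩ ::
      mid i ⟨(2 * m + 1) % (2 * n), Nat.mod_lt _ (by have := i.pos; omega)⟩ ::
      build rest (m + 1)

lemma mem_zip_tail_cons {α : Type*} {e : α × α} {B : List α} (x : α)
    (h : e ∈ B.zip B.tail) : e ∈ (x :: B).zip B := by
  cases B with
  | nil => simp at h
  | cons y B' => exact List.mem_cons_of_mem _ h

lemma build_spec {n : ℕ} (G : Fin n → Fin n → Prop) :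
    ∀ (l : List (Fin n)) (m : ℕ), m + l.length = n → l.Chain' G →
      (build l m).Chain' (Arc G) ∧ (build l m).getLast? = some (snk n) ∧
      (∀ c ∈ l, ∃ e ∈ (build l m).zip (build l m).tail, isVert c e = true) ∧
      (∀ i l', l = i :: l' → ∃ j : Fin (2 * n), j.val = 2 * m ∧
        (build l m).head? = some (mid i j)) ∧
      (l = [] → (build l m).head? = some (snk n)) := by
  intro l
  induction l with
  | nil =>
    intro m _ _
    refine ⟨List.isChain_singleton _, by simp [build], by simp, by simp, by simp [build]⟩
  | cons i rest ih =>
    intro m hm hch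
    have hmn : m < n := by simp at hm; omega
    have h2m : 2 * m % (2 * n) = 2 * m := Nat.mod_eq_of_lt (by omega)
    have h2m1 : (2 * m + 1) % (2 * n) = 2 * m + 1 := Nat.mod_eq_of_lt (by omega)
    obtain ⟨ihc, ihl, ihcov, ihh, ihe⟩ := ih (m + 1) (by simp at hm ⊢; omega) hch.tail
    have harc1 : Arc G (mid i ⟨2 * m % (2 * n), Nat.mod_lt _ (by have := i.pos; omega)⟩)
        (mid i ⟨(2 * m + 1) % (2 * n), Nat.mod_lt _ (by have := i.pos; omega)⟩) := by
      exact Or.inl ⟨rfl, by simp [h2m, h2m1]⟩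
    have harc2 : ∀ y ∈ (build rest (m+1)).head?,
        Arc G (mid i ⟨(2 * m + 1) % (2 * n), Nat.mod_lt _ (by have := i.pos; omega)⟩) y := by
      intro y hy
      cases rest with
      | nil =>
        have := ihe rfl
        rw [this] at hy
        simp at hy
        subst hy
        show (2 * m + 1) % (2 * n) = 2 * n - 1
        have : m + 1 = n := by simp at hm; omega
        omega
      | cons k rest' =>
        obtain ⟨j, hj, hh⟩ := ihh k rest' rfl
        rw [hh] at hy; simp at hy; subst hy
        refine Or.inr ⟨hch.rel_head, by simp only [Fin.val_mk, h2m1]; omega,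
          by simp only [Fin.val_mk, h2m1, hj]; omega⟩
    refine ⟨?_, ?_, ?_, ?_, by simp⟩
    · rw [build]
      rw [List.Chain', List.isChain_cons_cons, List.isChain_cons]
      exact ⟨harc1, harc2, ihc⟩
    · rw [build]
      rw [List.getLast?_cons_cons]
      cases rest with
      | nil => simpa [build] using ihl
      | cons k rest' =>
        rw [show build (k :: rest') (m+1) = _ :: _ :: build rest' (m+2) from rfl] at ihl ⊢
        rw [List.getLast?_cons_cons]
        exact ihl
    · intro c hc
      rcases List.mem_cons.mp hc with rfl | hc
      · refine ⟨(mid c ⟨2 * m % (2 * n), Nat.mod_lt _ (by have := c.pos; omega)⟩,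
          mid c ⟨(2 * m + 1) % (2 * n), Nat.mod_lt _ (by have := c.pos; omega)⟩), ?_, ?_⟩
        · rw [build]; exact List.mem_cons_self
        · simp [isVert]
      · obtain ⟨e, he, hv⟩ := ihcov c hc
        refine ⟨e, ?_, hv⟩
        rw [show build (i :: rest) m = _ :: _ :: build rest (m+1) from rfl]
        simp only [List.tail_cons, List.zip_cons_cons]
        exact List.mem_cons_of_mem _ (mem_zip_tail_cons _ he)
    · intro i' l' h
      cases h
      exact ⟨_, h2m, rfl⟩

lemma key {n : ℕ} (G : Fin n → Fin n → Prop) :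
    ∀ (N : ℕ) (q : List (Vtx n)), q.length ≤ N → q.Chain' (Arc G) →
    ∀ (i : Fin n) (j : Fin (2 * n)), j.val % 2 = 0 → q.head? = some (mid i j) →
    q.getLast? = some (snk n) →
    ∃ l : List (Fin n), l.head? = some i ∧ 2 * l.length + j.val = 2 * n ∧
      l.Chain' (fun a b => a = b ∨ G a b) ∧
      ∀ c : Fin n, (∃ e ∈ q.zip q.tail, isVert c e = true) → c ∈ l := by
  intro N
  induction N with
  | zero =>
    intro q hq _ i j _ hh _
    match q with
    | [] => simp at hh
    | _ :: _ => simp at hq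
  | succ N ih =>
    intro q hq hch i j hj hh hl
    have hn : 0 < n := i.pos
    match q, hh with
    | x :: rest, hh =>
      have hx : x = mid i j := by simpa using hh
      subst hx
      match rest, hl with
      | [], hl => simp [snk] at hl
      | y :: rest2, hl =>
        have harc : Arc G (mid i j) y := (List.isChain_cons_cons.mp hch).1
        match y with
        | Sum.inl _ => exact absurd harc (by simp [Arc])
        | Sum.inr (Sum.inr _) =>
          have : j.val = 2 * n - 1 := harc
          omega
        | Sum.inr (Sum.inl (k, j')) =>
          have hk : i = k ∧ j'.val = j.val + 1 := by
            rcases harc with ⟨h1, h2⟩ | ⟨_, h2, _⟩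
            · exact ⟨h1, h2⟩
            · omega
          have hk1 := hk.1
          have hj' := hk.2
          subst hk1
          match rest2, hl with
          | [], hl => simp [snk] at hl
          | z :: rest3, hl =>
            have hch2 : List.Chain' (Arc G) (mid i j' :: z :: rest3) :=
              (List.isChain_cons_cons.mp hch).2
            have harc2 : Arc G (mid i j') z := (List.isChain_cons_cons.mp hch2).1
            match z with
            | Sum.inl _ => exact absurd harc2 (by simp [Arc])
            | Sum.inr (Sum.inr _) =>
              have hjv : j'.val = 2 * n - 1 := harc2
              match rest3 with
              | _ :: _ =>
                exact absurd ((List.isChain_cons_cons.mp (List.isChain_cons_cons.mp hch2).2).1)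
                  (by simp [Arc])
              | [] =>
                refine ⟨[i], rfl, by simp; omega, List.isChain_singleton _, ?_⟩
                rintro c ⟨e, he, hv⟩
                simp only [List.zip_cons_cons, List.tail_cons, List.zip_nil_right,
                  List.mem_cons, List.mem_singleton] at he
                rcases he with rfl | rfl | h
                · simp [isVert] at hv; simp [hv]
                · simp [isVert] at hv; simp [hv]
                · simp at h
            | Sum.inr (Sum.inl (k, j'')) =>
              have hstep : (i = k ∨ G i k) ∧ j''.val = j'.val + 1 := by
                rcases harc2 with ⟨h1, h2⟩ | ⟨h1, _, h2⟩
                · exact ⟨Or.inl h1, h2⟩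
                · exact ⟨Or.inr h1, h2⟩
              obtain ⟨hik, hj''⟩ := hstep
              have hlast2 : (Sum.inr (Sum.inl (k, j'')) :: rest3 : List (Vtx n)).getLast?
                  = some (snk n) := by
                rw [List.getLast?_cons_cons, List.getLast?_cons_cons] at hl
                exact hl
              obtain ⟨l', hh', hlen', hch', hcov'⟩ :=
                ih (Sum.inr (Sum.inl (k, j'')) :: rest3)
                  (by simp at hq ⊢; omega) (List.isChain_cons_cons.mp hch2).2
                  k j'' (by omega) rfl hlast2
              refine ⟨i :: l', rfl, by simp; omega, ?_, ?_⟩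
              · rw [List.Chain', List.isChain_cons]
                refine ⟨?_, hch'⟩
                intro ι hι
                rw [hh'] at hι; simp at hι; subst hι
                exact hik
              · rintro c ⟨e, he, hv⟩
                simp only [List.zip_cons_cons, List.tail_cons, List.mem_cons] at he
                rcases he with rfl | rfl | h
                · simp [isVert] at hv
                  simp [hv]
                · simp [isVert] at hv
                  simp [hv.1]
                · exact List.mem_cons_of_mem _ (hcov' c ⟨e, h, hv⟩)

lemma chain'_and_aux {α : Type*} {R S : α → α → Prop} :
    ∀ {l : List α}, l.Chain' R → l.Chain' S → l.Chain' (fun a b => R a b ∧ S a b)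
  | [], _, _ => List.isChain_nil
  | [_], _, _ => List.isChain_singleton _
  | _ :: _ :: _, hR, hS => by
    rw [List.Chain', List.isChain_cons_cons] at hR hS ⊢
    exact ⟨⟨hR.1, hS.1⟩, chain'_and_aux hR.2 hS.2⟩


theorem hamPath_iff_path_meeting_all_verticals (n : ℕ) (hn : 0 < n)
    (G : Fin n → Fin n → Prop) :
    HasHamPath G ↔
      ∃ p : List (Vtx n), IsPath (Arc G) (src n) (snk n) p ∧
        ∀ i : Fin n, ∃ e ∈ p.zip p.tail, isVert i e = true := by
  show (∃ l : List (Fin n), l.Nodup ∧ l.length = n ∧ l.Chain' G) ↔ _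
  constructor
  · rintro ⟨l, hnd, hlen, hch⟩
    obtain ⟨hc, hlast, hcov, hhead, _⟩ := build_spec G l 0 (by simp [hlen]) hch
    match l, hlen with
    | [], hlen => simp at hlen; omega
    | i :: l', hlen =>
      obtain ⟨j, hj, hh⟩ := hhead i l' rfl
      refine ⟨src n :: build (i :: l') 0, ⟨?_, rfl, ?_⟩, ?_⟩
      · rw [List.Chain', List.isChain_cons]
        refine ⟨?_, hc⟩
        intro y hy
        rw [hh] at hy; simp at hy; subst hy
        show (j : ℕ) = 0
        omega
      · rw [show build (i :: l') 0 = _ :: _ :: build l' 1 from rfl] at hlast ⊢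
        rw [List.getLast?_cons_cons]
        exact hlast
      · intro c
        have hmem : c ∈ i :: l' := by
          have h1 : (i :: l').toFinset = Finset.univ :=
            Finset.eq_univ_of_card _
              (by rw [List.toFinset_card_of_nodup hnd, hlen, Fintype.card_fin])
          rw [← List.mem_toFinset, h1]
          exact Finset.mem_univ c
        obtain ⟨e, he, hv⟩ := hcov c hmem
        exact ⟨e, mem_zip_tail_cons _ he, hv⟩
  · rintro ⟨p, ⟨hch, hh, hl⟩, hcov⟩
    match p, hh with
    | x :: q, hh =>
      have hx : x = src n := by simpa using hh
      subst hx
      match q, hl with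
      | [], hl => simp [src, snk] at hl
      | y :: q', hl =>
        have harc : Arc G (src n) y := (List.isChain_cons_cons.mp hch).1
        match y with
        | Sum.inl _ => exact absurd harc (by simp [Arc, src])
        | Sum.inr (Sum.inr _) => exact absurd harc (by simp [Arc, src])
        | Sum.inr (Sum.inl (i, j)) =>
          have hj0 : (j : ℕ) = 0 := harc
          have hlast : (Sum.inr (Sum.inl (i, j)) :: q' : List (Vtx n)).getLast?
              = some (snk n) := by
            rw [List.getLast?_cons_cons] at hl
            exact hl
          obtain ⟨l, hh', hlen', hch', hcov'⟩ :=
            key G (Sum.inr (Sum.inl (i, j)) :: q').length _ le_rfl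
              (List.isChain_cons_cons.mp hch).2 i j (by omega) rfl hlast
          have hlenn : l.length = n := by omega
          have hmem : ∀ c : Fin n, c ∈ l := by
            intro c
            obtain ⟨e, he, hv⟩ := hcov c
            simp only [List.tail_cons, List.zip_cons_cons, List.mem_cons] at he
            rcases he with rfl | h
            · have : i = c := by simpa [isVert, src] using hv
              subst this
              exact List.mem_of_mem_head? hh'
            · exact hcov' c ⟨e, h, hv⟩
          have hdl : l.dedup = l := by
            apply (List.dedup_sublist l).eq_of_length
            have h1 : n ≤ l.dedup.length := by
              have h2 : (Finset.univ : Finset (Fin n)) ⊆ l.toFinset := fun c _ => by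
                rw [List.mem_toFinset]; exact hmem c
              have := Finset.card_le_card h2
              rwa [Finset.card_univ, Fintype.card_fin, List.card_toFinset] at this
            have h3 := (List.dedup_sublist l).length_le
            omega
          have hnd : l.Nodup := hdl ▸ l.nodup_dedup
          have hne : l.Chain' (· ≠ ·) := List.Pairwise.isChain hnd
          exact ⟨l, hnd, hlenn, (chain'_and_aux hch' hne).imp
            fun _ _ h => h.1.resolve_left h.2⟩
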